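/- Suppose f = g ∘ ℬ with ℬ : E₁ → E₃ a continuous linear map and g : E₃ → ℝ differentiable and α_g-strongly convex, and suppose R_Q is the indicator function of a nonempty compact convex polytope ℱ = {q ∈ E : 𝒞q ≤ b} (𝒞 : E → ℝᵖ linear, b ∈ ℝᵖ), and that the augmented Lagrangian L_ρ has a saddle point. Then there exists a constant σ > 0 such that for every q = (x,y) ∈ ℱ, writing q* = (x*, y*) for the Euclidean projection of q onto 𝒫*, one has f(x*) − f(x) ≥ ⟨∇f(x), x* − x⟩ + (α_g/(2σ))‖q* − q‖² − (α_g/2)‖𝒦q‖². -/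

import Mathlib

open scoped RealInnerProductSpace
set_option maxHeartbeats 2000000
noncomputable section

variable {E₁ E₂ E₃ : Type*}
  [NormedAddCommGroup E₁] [InnerProductSpace ℝ E₁] [FiniteDimensional ℝ E₁]
  [NormedAddCommGroup E₂] [InnerProductSpace ℝ E₂] [FiniteDimensional ℝ E₂]
  [NormedAddCommGroup E₃] [InnerProductSpace ℝ E₃] [FiniteDimensional ℝ E₃]

/-- first component of a point of `E := E₁ ×₂ E₂` -/
def xPart (q : WithLp 2 (E₁ × E₂)) : E₁ := (WithLp.equiv 2 (E₁ × E₂) q).1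

/-- The constraint map `𝒦(x,y) := 𝒜x − y`, as a continuous linear map. -/
def Kmap (A : E₁ →L[ℝ] E₂) : WithLp 2 (E₁ × E₂) →L[ℝ] E₂ :=
  (A.comp (ContinuousLinearMap.fst ℝ E₁ E₂) - ContinuousLinearMap.snd ℝ E₁ E₂).comp
    (WithLp.prodContinuousLinearEquiv 2 ℝ E₁ E₂).toContinuousLinearMap

/-- objective of Problem (OP): `h(q) := f(x) + R_Q(q)` -/
def hOP (f : E₁ → ℝ) (RQ : WithLp 2 (E₁ × E₂) → EReal) (q : WithLp 2 (E₁ × E₂)) : EReal :=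
  (f (xPart q) : EReal) + RQ q

/-- the augmented Lagrangian `L_ρ(q,w) := h(q) + ⟨w,𝒦q⟩ + (ρ/2)‖𝒦q‖²` -/
def AL (f : E₁ → ℝ) (RQ : WithLp 2 (E₁ × E₂) → EReal) (A : E₁ →L[ℝ] E₂) (ρ : ℝ)
    (q : WithLp 2 (E₁ × E₂)) (w : E₂) : EReal :=
  hOP f RQ q + ((⟪w, Kmap A q⟫ + ρ / 2 * ‖Kmap A q‖ ^ 2 : ℝ) : EReal)

/-- saddle point of the augmented Lagrangian -/
def IsSaddle (f : E₁ → ℝ) (RQ : WithLp 2 (E₁ × E₂) → EReal) (A : E₁ →L[ℝ] E₂) (ρ : ℝ)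
    (qs : WithLp 2 (E₁ × E₂)) (ws : E₂) : Prop :=
  ∀ q : WithLp 2 (E₁ × E₂), ∀ w : E₂,
    AL f RQ A ρ qs w ≤ AL f RQ A ρ qs ws ∧ AL f RQ A ρ qs ws ≤ AL f RQ A ρ q ws

/-- set of optimal solutions of Problem (OP) -/
def OptSet (f : E₁ → ℝ) (RQ : WithLp 2 (E₁ × E₂) → EReal) (A : E₁ →L[ℝ] E₂) :
    Set (WithLp 2 (E₁ × E₂)) :=
  {q | Kmap A q = 0 ∧ ∀ p, Kmap A p = 0 → hOP f RQ q ≤ hOP f RQ p}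

/-- A uniform positivity constant for a finite family of closed cones on which a continuous
2-homogeneous function is positive away from zero. -/
lemma cone_min {E : Type*} [NormedAddCommGroup E] [InnerProductSpace ℝ E] [FiniteDimensional ℝ E]
    {ι : Type*} [Fintype ι] [Nonempty ι] (W : ι → Set E)
    (hWclosed : ∀ i, IsClosed (W i))
    (hWcone : ∀ i, ∀ u ∈ W i, ∀ c : ℝ, 0 < c → c • u ∈ W i)
    (φ : E → ℝ) (hφcont : Continuous φ) (hφ0 : φ 0 = 0)
    (hφpos : ∀ i, ∀ u ∈ W i, ‖u‖ = 1 → 0 < φ u)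
    (hφhom : ∀ (c : ℝ) u, 0 ≤ c → φ (c • u) = c ^ 2 * φ u) :
    ∃ m : ℝ, 0 < m ∧ ∀ i, ∀ u ∈ W i, m * ‖u‖ ^ 2 ≤ φ u := by
  have key : ∀ i, ∃ m : ℝ, 0 < m ∧ ∀ u ∈ W i, m * ‖u‖ ^ 2 ≤ φ u := by
    intro i
    have hsph : ∀ u : E, u ≠ 0 → ‖u‖⁻¹ • u ∈ Metric.sphere (0 : E) 1 := by
      intro u hne
      have hn : 0 < ‖u‖ := norm_pos_iff.mpr hne
      simp [norm_smul, abs_of_pos (inv_pos.mpr hn), inv_mul_cancel₀ hn.ne']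
    by_cases hS : (W i ∩ Metric.sphere 0 1).Nonempty
    · have hcpt : IsCompact (W i ∩ Metric.sphere 0 1) :=
        (isCompact_sphere (0 : E) 1).inter_left (hWclosed i)
      obtain ⟨u0, hu0, hmin⟩ := hcpt.exists_isMinOn hS hφcont.continuousOn
      refine ⟨φ u0, hφpos i u0 hu0.1 (by simpa using hu0.2), ?_⟩
      intro u hu
      rcases eq_or_ne u 0 with rfl | hne
      · simp [hφ0]
      · have hn : 0 < ‖u‖ := norm_pos_iff.mpr hne
        have hmem : ‖u‖⁻¹ • u ∈ W i ∩ Metric.sphere 0 1 :=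
          ⟨hWcone i u hu _ (inv_pos.mpr hn), hsph u hne⟩
        have h2 : φ u = ‖u‖ ^ 2 * φ (‖u‖⁻¹ • u) := by
          rw [← hφhom _ _ (norm_nonneg u), smul_smul, mul_inv_cancel₀ hn.ne', one_smul]
        have h3 : φ u0 ≤ φ (‖u‖⁻¹ • u) := hmin hmem
        rw [h2]
        nlinarith [sq_nonneg ‖u‖]
    · refine ⟨1, one_pos, ?_⟩
      intro u hu
      rcases eq_or_ne u 0 with rfl | hne
      · simp [hφ0]
      · exact absurd ⟨‖u‖⁻¹ • u, hWcone i u hu _ (inv_pos.mpr (norm_pos_iff.mpr hne)),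
          hsph u hne⟩ hS
  choose m hm hmle using key
  refine ⟨Finset.univ.inf' Finset.univ_nonempty m, ?_, ?_⟩
  · exact (Finset.lt_inf'_iff _).mpr fun i _ => hm i
  · intro i u hu
    exact le_trans (mul_le_mul_of_nonneg_right
      (Finset.inf'_le _ (Finset.mem_univ i)) (sq_nonneg _)) (hmle i u hu)

lemma grad_comp' (g : E₃ → ℝ) (hg : Differentiable ℝ g) (B : E₁ →L[ℝ] E₃) (x h : E₁) :
    ⟪gradient (fun x => g (B x)) x, h⟫ = ⟪gradient g (B x), B h⟫ := by
  have h1 : fderiv ℝ (fun x => g (B x)) x = (fderiv ℝ g (B x)).comp (B : E₁ →L[ℝ] E₃) :=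
    (fderiv_comp x (hg (B x)) B.differentiableAt).trans (by rw [B.fderiv])
  rw [gradient, gradient, InnerProductSpace.toDual_symm_apply,
    InnerProductSpace.toDual_symm_apply, h1]
  rfl

/-- under the polytope/strongly-convex-composite assumptions, there is
`σ > 0` such that for every `q = (x,y) ∈ ℱ`, with `q* = (x*,y*)` the Euclidean projection
of `q` onto `𝒫*`,
`f(x*) − f(x) ≥ ⟨∇f(x), x* − x⟩ + (α_g/(2σ))‖q* − q‖² − (α_g/2)‖𝒦q‖²`. -/
theorem alternative_strong_convexity (g : E₃ → ℝ) (B : E₁ →L[ℝ] E₃) (f : E₁ → ℝ)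
    (hf : f = fun x => g (B x))
    (αg : ℝ) (hαg : 0 < αg) (hgdiff : Differentiable ℝ g)
    (hgsc : ∀ u v : E₃, g v ≥ g u + ⟪gradient g u, v - u⟫ + αg / 2 * ‖v - u‖ ^ 2)
    (p : ℕ) (C : WithLp 2 (E₁ × E₂) →ₗ[ℝ] (Fin p → ℝ)) (b : Fin p → ℝ)
    (F : Set (WithLp 2 (E₁ × E₂))) (hF : F = {q | ∀ i, C q i ≤ b i})
    (hFne : F.Nonempty) (hFcpt : IsCompact F)
    (RQ : WithLp 2 (E₁ × E₂) → EReal)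
    (hRQ : ∀ q, (q ∈ F → RQ q = 0) ∧ (q ∉ F → RQ q = ⊤))
    (A : E₁ →L[ℝ] E₂) (ρ : ℝ) (hρ : 0 < ρ)
    (hsaddle : ∃ qs ws, IsSaddle f RQ A ρ qs ws) :
    ∃ σ : ℝ, 0 < σ ∧
      ∀ q ∈ F, ∀ qs ∈ OptSet f RQ A,
        -- `qs` is the Euclidean projection of `q` onto `𝒫*`
        (∀ pt ∈ OptSet f RQ A, ‖q - qs‖ ≤ ‖q - pt‖) →
        f (xPart qs) - f (xPart q) ≥
          ⟪gradient f (xPart q), xPart qs - xPart q⟫ +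
            αg / (2 * σ) * ‖qs - q‖ ^ 2 - αg / 2 * ‖Kmap A q‖ ^ 2 := by
  classical
  -- a feasible point of (OP) lying in `F`, extracted from the saddle point
  obtain ⟨q0, hq0F, hq0K⟩ : ∃ q0 ∈ F, Kmap A q0 = 0 := by
    obtain ⟨qs0, ws, hsad⟩ := hsaddle
    obtain ⟨r0, hr0F⟩ := hFne
    have hALr0 : AL f RQ A ρ r0 ws
        = ((f (xPart r0) + (⟪ws, Kmap A r0⟫ + ρ/2 * ‖Kmap A r0‖^2) : ℝ) : EReal) := by
      rw [AL, hOP, (hRQ r0).1 hr0F, add_zero, ← EReal.coe_add]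
    have hmem : qs0 ∈ F := by
      by_contra hn
      have htop : AL f RQ A ρ qs0 ws = ⊤ := by
        rw [AL, hOP, (hRQ qs0).2 hn, EReal.coe_add_top, EReal.top_add_coe]
      have h2 := (hsad r0 ws).2
      rw [htop, hALr0] at h2
      exact ((EReal.coe_lt_top _ : ((_ : ℝ) : EReal) < ⊤)).not_ge h2
    refine ⟨qs0, hmem, ?_⟩
    have hhop : hOP f RQ qs0 = ((f (xPart qs0) : ℝ) : EReal) := by
      rw [hOP, (hRQ qs0).1 hmem, add_zero]
    set k := Kmap A qs0 with hk
    have h1 := (hsad qs0 (ws + k)).1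
    rw [AL, AL, hhop, ← hk, ← EReal.coe_add, ← EReal.coe_add, EReal.coe_le_coe_iff] at h1
    have hkk : ⟪k, k⟫ ≤ 0 := by
      simp only [inner_add_left] at h1
      linarith
    exact real_inner_self_nonpos.mp hkk
  have hOPF : ∀ r ∈ F, hOP f RQ r = ((f (xPart r)) : EReal) := by
    intro r hr; rw [hOP, (hRQ r).1 hr, add_zero]
  have hPF : ∀ r ∈ OptSet f RQ A, r ∈ F := by
    intro r hr
    by_contra hn
    have h1 := hr.2 q0 hq0K
    rw [hOP, (hRQ r).2 hn, EReal.coe_add_top, hOPF q0 hq0F] at h1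
    exact ((EReal.coe_lt_top _ : ((_ : ℝ) : EReal) < ⊤)).not_ge h1
  -- the finite family of cones and the residual function
  have hCc : Continuous fun u : WithLp 2 (E₁ × E₂) => C u := C.continuous_of_finiteDimensional
  have hxc : Continuous fun u : WithLp 2 (E₁ × E₂) => xPart u :=
    continuous_fst.comp (WithLp.prodContinuousLinearEquiv 2 ℝ E₁ E₂).continuous
  have hxadd : ∀ a c : WithLp 2 (E₁ × E₂), xPart (a + c) = xPart a + xPart c := fun _ _ => rfl
  have hxsub : ∀ a c : WithLp 2 (E₁ × E₂), xPart (a - c) = xPart a - xPart c := fun _ _ => rfl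
  have hxsmul : ∀ (t : ℝ) (a : WithLp 2 (E₁ × E₂)), xPart (t • a) = t • xPart a :=
    fun _ _ => rfl
  set φ : WithLp 2 (E₁ × E₂) → ℝ := fun u => ‖Kmap A u‖^2 + ‖B (xPart u)‖^2 with hφdef
  set W : Finset (Fin p) → Set (WithLp 2 (E₁ × E₂)) := fun I =>
    {u | (∀ i ∈ I, C u i ≤ 0) ∧ ∀ v : WithLp 2 (E₁ × E₂),
        (∀ i ∈ I, C v i ≤ 0) → Kmap A v = 0 → B (xPart v) = 0 → ⟪u, v⟫ ≤ 0} with hWdef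
  have hWclosed : ∀ I, IsClosed (W I) := by
    intro I
    have h1 : IsClosed {u : WithLp 2 (E₁ × E₂) | ∀ i ∈ I, C u i ≤ 0} := by
      have he : {u : WithLp 2 (E₁ × E₂) | ∀ i ∈ I, C u i ≤ 0}
          = ⋂ i ∈ I, {u | C u i ≤ 0} := by
        ext u; simp
      rw [he]
      exact isClosed_biInter fun i _ =>
        isClosed_le ((continuous_apply i).comp hCc) continuous_const
    have h2 : IsClosed {u : WithLp 2 (E₁ × E₂) | ∀ v : WithLp 2 (E₁ × E₂),
        (∀ i ∈ I, C v i ≤ 0) → Kmap A v = 0 → B (xPart v) = 0 → ⟪u, v⟫ ≤ 0} := by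
      have he : {u : WithLp 2 (E₁ × E₂) | ∀ v : WithLp 2 (E₁ × E₂),
          (∀ i ∈ I, C v i ≤ 0) → Kmap A v = 0 → B (xPart v) = 0 → ⟪u, v⟫ ≤ 0}
          = ⋂ v ∈ {v : WithLp 2 (E₁ × E₂) |
              (∀ i ∈ I, C v i ≤ 0) ∧ Kmap A v = 0 ∧ B (xPart v) = 0},
              {u | ⟪u, v⟫ ≤ 0} := by
        ext u
        simp only [Set.mem_setOf_eq, Set.mem_iInter]
        constructor
        · intro h v hv; exact h v hv.1 hv.2.1 hv.2.2
        · intro h v hv1 hv2 hv3; exact h v ⟨hv1, hv2, hv3⟩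
      rw [he]
      exact isClosed_biInter fun v _ =>
        isClosed_le (continuous_id.inner continuous_const) continuous_const
    exact h1.inter h2
  have hWcone : ∀ I, ∀ u ∈ W I, ∀ c : ℝ, 0 < c → c • u ∈ W I := by
    intro I u hu c hc
    constructor
    · intro i hi
      have h1 : C (c • u) i = c * C u i := by rw [map_smul]; rfl
      rw [h1]
      exact mul_nonpos_of_nonneg_of_nonpos hc.le (hu.1 i hi)
    · intro v hv1 hv2 hv3
      rw [real_inner_smul_left]
      exact mul_nonpos_of_nonneg_of_nonpos hc.le (hu.2 v hv1 hv2 hv3)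
  have hφcont : Continuous φ :=
    (((Kmap A).continuous.norm.pow 2)).add ((B.continuous.comp hxc).norm.pow 2)
  have hφ0 : φ 0 = 0 := by
    have : xPart (0 : WithLp 2 (E₁ × E₂)) = 0 := rfl
    simp [hφdef, this]
  have hφpos : ∀ I, ∀ u ∈ W I, ‖u‖ = 1 → 0 < φ u := by
    intro I u hu hn
    rcases lt_or_eq_of_le (by positivity : (0:ℝ) ≤ φ u) with h | h
    · exact h
    · exfalso
      have hsum : ‖Kmap A u‖^2 + ‖B (xPart u)‖^2 = 0 := by
        simp only [hφdef] at h; linarith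
      have hK : Kmap A u = 0 := by
        refine norm_le_zero_iff.mp ?_
        nlinarith [sq_nonneg ‖B (xPart u)‖, norm_nonneg (Kmap A u)]
      have hB : B (xPart u) = 0 := by
        refine norm_le_zero_iff.mp ?_
        nlinarith [sq_nonneg ‖Kmap A u‖, norm_nonneg (B (xPart u))]
      have := hu.2 u hu.1 hK hB
      have hu0 : u = 0 := real_inner_self_nonpos.mp this
      rw [hu0] at hn
      simp at hn
  have hφhom : ∀ (c : ℝ) (u : WithLp 2 (E₁ × E₂)), 0 ≤ c → φ (c • u) = c ^ 2 * φ u := by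
    intro c u hc
    simp only [hφdef, map_smul, hxsmul, norm_smul, mul_pow, sq_abs, Real.norm_eq_abs]
    ring
  obtain ⟨m, hm, hmle⟩ := cone_min W hWclosed hWcone φ hφcont hφ0 hφpos hφhom
  refine ⟨m⁻¹, inv_pos.mpr hm, ?_⟩
  intro q hqF qs hqs hproj
  have hqsF : qs ∈ F := hPF qs hqs
  have hqF' : ∀ i, C q i ≤ b i := by rw [hF] at hqF; exact hqF
  have hqsF2 : ∀ i, C qs i ≤ b i := by
    have h := hqsF; rw [hF] at h; exact h
  set I : Finset (Fin p) := Finset.univ.filter (fun i => C qs i = b i) with hI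
  set u : WithLp 2 (E₁ × E₂) := q - qs with hu
  have hu1 : ∀ i ∈ I, C u i ≤ 0 := by
    intro i hi
    have hbi : C qs i = b i := (Finset.mem_filter.mp hi).2
    have h1 : C u i = C q i - C qs i := by rw [hu, map_sub]; rfl
    rw [h1, hbi]
    linarith [hqF' i]
  have hu2 : ∀ v : WithLp 2 (E₁ × E₂),
      (∀ i ∈ I, C v i ≤ 0) → Kmap A v = 0 → B (xPart v) = 0 → ⟪u, v⟫ ≤ 0 := by
    intro v hv1 hv2 hv3
    have hev : ∀ᶠ t in nhdsWithin (0:ℝ) (Set.Ioi 0), 2 * ⟪u, v⟫ ≤ t * ‖v‖^2 := by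
      have hevF : ∀ᶠ t in nhdsWithin (0:ℝ) (Set.Ioi 0), qs + t • v ∈ F := by
        have hall : ∀ᶠ t in nhdsWithin (0:ℝ) (Set.Ioi 0), ∀ i, C (qs + t • v) i ≤ b i := by
          rw [Filter.eventually_all]
          intro i
          have hCexp : ∀ t : ℝ, C (qs + t • v) i = C qs i + t * C v i := by
            intro t; rw [map_add, map_smul]; rfl
          by_cases hi : i ∈ I
          · have h1 : C qs i = b i := (Finset.mem_filter.mp hi).2
            have h2 : C v i ≤ 0 := hv1 i hi
            filter_upwards [self_mem_nhdsWithin] with t ht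
            have ht' : (0:ℝ) < t := ht
            rw [hCexp, h1]
            nlinarith
          · have hne : C qs i ≠ b i := by
              intro he; exact hi (Finset.mem_filter.mpr ⟨Finset.mem_univ i, he⟩)
            have hlt : C qs i < b i := lt_of_le_of_ne (hqsF2 i) hne
            have htend : Filter.Tendsto (fun t : ℝ => C qs i + t * C v i)
                (nhdsWithin 0 (Set.Ioi 0)) (nhds (C qs i)) := by
              have h1 : Filter.Tendsto (fun t : ℝ => C qs i + t * C v i)
                  (nhds 0) (nhds (C qs i + 0 * C v i)) :=
                ((continuous_const.add (continuous_id.mul continuous_const)).tendsto 0)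
              simpa using h1.mono_left nhdsWithin_le_nhds
            filter_upwards [htend.eventually_lt_const hlt] with t ht
            rw [hCexp]; exact ht.le
        rw [hF]
        exact hall
      filter_upwards [hevF, self_mem_nhdsWithin] with t htF ht
      have ht' : (0:ℝ) < t := ht
      have hpt : qs + t • v ∈ OptSet f RQ A := by
        constructor
        · rw [map_add, map_smul, hqs.1, hv2, smul_zero, add_zero]
        · intro r hr
          rw [hOPF _ htF]
          have hxe : xPart (qs + t • v) = xPart qs + t • xPart v := rfl
          have hfe : f (xPart (qs + t • v)) = f (xPart qs) := by
            rw [hf]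
            simp only [hxe, map_add, map_smul, hv3, smul_zero, add_zero]
          rw [hfe, ← hOPF qs hqsF]
          exact hqs.2 r hr
      have hd := hproj _ hpt
      have heq : q - (qs + t • v) = u - t • v := by rw [hu]; abel
      rw [heq] at hd
      have hsq : ‖u‖^2 ≤ ‖u - t • v‖^2 := pow_le_pow_left₀ (norm_nonneg _) hd 2
      have hexp : ‖u - t • v‖^2 = ‖u‖^2 - 2 * (t * ⟪u, v⟫) + t^2 * ‖v‖^2 := by
        rw [norm_sub_sq_real, real_inner_smul_right, norm_smul]
        rw [Real.norm_eq_abs, mul_pow, sq_abs]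
      have hkey : t * (2 * ⟪u, v⟫) ≤ t * (t * ‖v‖^2) := by nlinarith
      exact (mul_le_mul_iff_right₀ ht').mp hkey
    have hten : Filter.Tendsto (fun t : ℝ => t * ‖v‖^2)
        (nhdsWithin (0:ℝ) (Set.Ioi 0)) (nhds 0) := by
      have h1 : Filter.Tendsto (fun t : ℝ => t * ‖v‖^2) (nhds 0) (nhds (0 * ‖v‖^2)) :=
        (continuous_id.mul continuous_const).tendsto 0
      simpa using h1.mono_left nhdsWithin_le_nhds
    have h2 := ge_of_tendsto hten hev
    linarith
  have huW : u ∈ W I := by rw [hWdef]; exact ⟨hu1, hu2⟩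
  have hb2 := hmle I u huW
  simp only [hφdef] at hb2
  have hKu : Kmap A u = Kmap A q := by rw [hu, map_sub, hqs.1, sub_zero]
  have hxu : B (xPart u) = B (xPart q) - B (xPart qs) := by rw [hu, hxsub, map_sub]
  rw [hKu, hxu, norm_sub_rev (B (xPart q))] at hb2
  have hnuq : ‖u‖ = ‖qs - q‖ := by rw [hu, norm_sub_rev]
  rw [hnuq] at hb2
  -- strong convexity and the chain rule for the gradient
  have hsc := hgsc (B (xPart q)) (B (xPart qs))
  have hgr := grad_comp' g hgdiff B (xPart q) (xPart qs - xPart q)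
  have hgoal1 : ⟪gradient f (xPart q), xPart qs - xPart q⟫
      = ⟪gradient g (B (xPart q)), B (xPart qs) - B (xPart q)⟫ := by
    rw [hf]
    rw [hgr, map_sub]
  have hfq : f (xPart q) = g (B (xPart q)) := by rw [hf]
  have hfqs : f (xPart qs) = g (B (xPart qs)) := by rw [hf]
  have hcoef : αg / (2 * m⁻¹) = αg / 2 * m := by
    field_simp
  rw [ge_iff_le, hgoal1, hfq, hfqs, hcoef]
  have hmul := mul_le_mul_of_nonneg_left hb2 (le_of_lt (half_pos hαg))
  nlinarith [hsc, hmul]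

end
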